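/- Let A be a finite-dimensional associative algebra over a field F of characteristic zero, with Wedderburn decomposition A = \bar{A} \oplus J(A) where \bar{A} is semisimple and J(A) is the Jacobson radical with nilpotency index s (J(A)^s = 0). Let f be a multilinear polynomial that has r \ge s disjoint alternating sets of variables, each of cardinality m > dim_F(\bar{A}). Then f is a polynomial identity of A. -/

import Mathlib

open scoped BigOperators

lemma stmt2_factor_aux {F : Type*} [Semiring F] {A : Type*} [Ring A] [Module F A]
    (J : Submodule F A) (hJl : ∀ a : A, ∀ x ∈ J, a * x ∈ J) :
    ∀ {P L : List A}, P.Sublist L → (∀ a ∈ P, a ∈ J) →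
      ∃ (zl : List A) (d : A), (∀ a ∈ zl, a ∈ J) ∧ zl.length = P.length ∧
        L.prod = zl.prod * d := by
  intro P L h
  induction h with
  | slnil => exact fun _ => ⟨[], 1, by simp, rfl, by simp⟩
  | @cons l₁ l₂ a h ih =>
      intro hP
      obtain ⟨zl, d, hz, hlen, hprod⟩ := ih hP
      cases zl with
      | nil =>
          exact ⟨[], a * d, by simp, hlen, by
            simp [List.prod_cons, hprod, mul_assoc]⟩
      | cons b tl =>
          refine ⟨(a * b) :: tl, d, ?_, by simpa using hlen, ?_⟩
          · intro x hx
            rcases List.mem_cons.mp hx with hx | hx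
            · subst hx; exact hJl a b (hz b (by simp))
            · exact hz x (by simp [hx])
          · simp only [List.prod_cons] at hprod ⊢
            rw [hprod, ← mul_assoc, ← mul_assoc]
  | @cons_cons l₁ l₂ a h ih =>
      intro hP
      obtain ⟨zl, d, hz, hlen, hprod⟩ := ih (fun x hx => hP x (by simp [hx]))
      refine ⟨a :: zl, d, ?_, by simpa using hlen, ?_⟩
      · intro x hx
        rcases List.mem_cons.mp hx with hx | hx
        · rw [hx]; exact hP a (by simp)
        · exact hz x hx
      · simp only [List.prod_cons]
        rw [hprod, ← mul_assoc]

lemma stmt2_countP_ofFn {α : Type*} (p : α → Bool) :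
    ∀ (n : ℕ) (f : Fin n → α),
      (List.ofFn f).countP p = (Finset.univ.filter fun i => p (f i) = true).card := by
  intro n
  induction n with
  | zero => intro f; simp
  | succ n ih =>
      intro f
      rw [List.ofFn_succ, List.countP_cons, ih]
      rw [Finset.card_filter, Finset.card_filter, Fin.sum_univ_succ]
      simp [add_comm]

lemma stmt2_prod_eq_zero {F : Type*} [Semiring F] {A : Type*} [Ring A] [Module F A]
    (J : Submodule F A) (hJl : ∀ a : A, ∀ x ∈ J, a * x ∈ J)
    (s : ℕ) (hnil : ∀ z : Fin s → A, (∀ i, z i ∈ J) → (List.ofFn z).prod = 0)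
    {n : ℕ} (f : Fin n → A) {r : ℕ} (hr : s ≤ r) (q : Fin r → Fin n)
    (hq : Function.Injective q) (hmem : ∀ t, f (q t) ∈ J) :
    (List.ofFn f).prod = 0 := by
  classical
  let p : A → Bool := fun a => decide (a ∈ J)
  have hcard : r ≤ (Finset.univ.filter fun i => p (f i) = true).card := by
    have h1 := Finset.card_le_card_of_injOn (s := Finset.univ) (t := Finset.univ.filter fun i => p (f i) = true) q
      (fun t _ => Finset.mem_filter.mpr ⟨Finset.mem_univ _, decide_eq_true (hmem t)⟩) (fun a _ b _ hab => hq hab)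
    simpa using h1
  have hcount : s ≤ (List.ofFn f).countP p := by
    rw [stmt2_countP_ofFn]
    exact le_trans hr hcard
  set P : List A := ((List.ofFn f).filter p).take s with hP
  have hsub : P.Sublist (List.ofFn f) :=
    (List.take_sublist _ _).trans List.filter_sublist
  have hlenP : P.length = s := by
    rw [hP, List.length_take, ← List.countP_eq_length_filter]
    exact min_eq_left hcount
  have hmemP : ∀ a ∈ P, a ∈ J := by
    intro a ha
    have h2 : a ∈ (List.ofFn f).filter p := List.take_subset _ _ ha
    have h3 := List.of_mem_filter h2
    exact of_decide_eq_true h3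
  obtain ⟨zl, d, hz, hlen, hprod⟩ := stmt2_factor_aux (F := F) J hJl hsub hmemP
  rw [hlenP] at hlen
  subst hlen
  have h0 : (List.ofFn zl.get).prod = 0 :=
    hnil zl.get (fun i => hz _ (zl.get_mem i))
  rw [List.ofFn_get] at h0
  rw [hprod, h0, zero_mul]


/-- Let `A` be a finite-dimensional algebra over a field `F` of
characteristic zero with Wedderburn decomposition `A = S ⊕ J` (`S` a semisimple
subalgebra, `J` the radical, `J^s = 0`).  A multilinear polynomial (represented here by
its coefficients `c w`, one for each ordering `w` of the variables
`(Fin r × Fin m) ⊕ Fin k`) which has `r ≥ s` disjoint alternating sets of variables each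
of cardinality `m > dim_F S` is a polynomial identity of `A`, i.e. every evaluation
vanishes. -/
theorem stmt_2 {F : Type*} [Field F] [CharZero F] {A : Type*} [Ring A] [Algebra F A]
    [FiniteDimensional F A]
    (S : Subalgebra F A) [IsSemisimpleRing S]
    (J : Submodule F A)
    (hJl : ∀ a : A, ∀ x ∈ J, a * x ∈ J)
    (hJr : ∀ a : A, ∀ x ∈ J, x * a ∈ J)
    (hcompl : IsCompl (Subalgebra.toSubmodule S) J)
    (s : ℕ) (hnil : ∀ z : Fin s → A, (∀ i, z i ∈ J) → (List.ofFn z).prod = 0)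
    (r m k : ℕ) (hr : s ≤ r) (hm : Module.finrank F S < m)
    (c : (Fin (r * m + k) ≃ (Fin r × Fin m) ⊕ Fin k) → F)
    (halt : ∀ (w : Fin (r * m + k) ≃ (Fin r × Fin m) ⊕ Fin k)
        (t : Fin r) (i j : Fin m), i ≠ j →
      c (w.trans (Equiv.swap (Sum.inl (t, i)) (Sum.inl (t, j)))) = - c w)
    (v : (Fin r × Fin m) ⊕ Fin k → A) :
    ∑ w : Fin (r * m + k) ≃ (Fin r × Fin m) ⊕ Fin k,
      c w • (List.ofFn fun p => v (w p)).prod = 0 := by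
  classical
  -- the multilinear map
  set G : MultilinearMap F (fun _ : (Fin r × Fin m) ⊕ Fin k => A) A :=
    ∑ w : Fin (r * m + k) ≃ (Fin r × Fin m) ⊕ Fin k,
      c w • (MultilinearMap.mkPiAlgebraFin F (r * m + k) A).domDomCongr w with hG
  have hGapply : ∀ v' : (Fin r × Fin m) ⊕ Fin k → A,
      G v' = ∑ w : Fin (r * m + k) ≃ (Fin r × Fin m) ⊕ Fin k,
        c w • (List.ofFn fun p => v' (w p)).prod := by
    intro v'
    rw [hG, MultilinearMap.sum_apply]
    refine Finset.sum_congr rfl fun w _ => ?_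
    rw [MultilinearMap.smul_apply, MultilinearMap.domDomCongr_apply,
      MultilinearMap.mkPiAlgebraFin_apply]
  -- alternation: two equal entries in one alternating set kill G
  have key1 : ∀ (v' : (Fin r × Fin m) ⊕ Fin k → A) (t : Fin r) (i j : Fin m), i ≠ j →
      v' (Sum.inl (t, i)) = v' (Sum.inl (t, j)) → G v' = 0 := by
    intro v' t i j hij heq
    set σ : ((Fin r × Fin m) ⊕ Fin k) ≃ ((Fin r × Fin m) ⊕ Fin k) :=
      Equiv.swap (Sum.inl (t, i)) (Sum.inl (t, j)) with hσ
    have hvσ : ∀ x, v' (σ x) = v' x := by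
      intro x
      rcases eq_or_ne x (Sum.inl (t, i)) with h | h1
      · rw [h, hσ, Equiv.swap_apply_left, heq]
      rcases eq_or_ne x (Sum.inl (t, j)) with h | h2
      · rw [h, hσ, Equiv.swap_apply_right, heq]
      · rw [hσ, Equiv.swap_apply_of_ne_of_ne h1 h2]
    have hbij : Function.Bijective
        (fun w : Fin (r * m + k) ≃ (Fin r × Fin m) ⊕ Fin k => w.trans σ) := by
      constructor
      · intro w1 w2 h12
        ext p
        have h13 := congrArg (fun e : Fin (r * m + k) ≃ (Fin r × Fin m) ⊕ Fin k
          => σ.symm (e p)) h12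
        simpa using h13
      · intro w
        refine ⟨w.trans σ.symm, ?_⟩
        ext p
        simp
    have hneg : G v' = - G v' := by
      have hstep : ∀ w : Fin (r * m + k) ≃ (Fin r × Fin m) ⊕ Fin k,
          c w • (List.ofFn fun p => v' (w p)).prod
          = - (c (w.trans σ) • (List.ofFn fun p => v' ((w.trans σ) p)).prod) := by
        intro w
        have h1 : c (w.trans σ) = - c w := halt w t i j hij
        have h2 : (fun p => v' ((w.trans σ) p)) = fun p => v' (w p) :=
          funext fun p => hvσ (w p)
        rw [h1, h2, neg_smul, neg_neg]
      calc G v' = ∑ w : Fin (r * m + k) ≃ (Fin r × Fin m) ⊕ Fin k,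
            c w • (List.ofFn fun p => v' (w p)).prod := hGapply v'
        _ = ∑ w : Fin (r * m + k) ≃ (Fin r × Fin m) ⊕ Fin k,
            - (c w • (List.ofFn fun p => v' (w p)).prod) :=
          Fintype.sum_bijective _ hbij _ _ hstep
        _ = - ∑ w : Fin (r * m + k) ≃ (Fin r × Fin m) ⊕ Fin k,
            c w • (List.ofFn fun p => v' (w p)).prod := by
          rw [Finset.sum_neg_distrib]
        _ = - G v' := by rw [← hGapply]
    have h2 : (2 : F) • G v' = 0 := by
      rw [two_smul]
      nth_rewrite 1 [hneg]
      simp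
    rcases smul_eq_zero.mp h2 with h4 | h4
    · exact absurd h4 two_ne_zero
    · exact h4
  -- an alternating set fully evaluated in S kills G
  have key2 : ∀ (v' : (Fin r × Fin m) ⊕ Fin k → A) (t : Fin r),
      (∀ i : Fin m, v' (Sum.inl (t, i)) ∈ S) → G v' = 0 := by
    intro v' t hS
    set u : Fin m → (Subalgebra.toSubmodule S) := fun i => ⟨v' (Sum.inl (t, i)), hS i⟩
      with hu
    have hdep : ¬ LinearIndependent F u := by
      intro hli
      have hcard := hli.fintype_card_le_finrank
      rw [Fintype.card_fin, Subalgebra.finrank_toSubmodule] at hcard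
      exact absurd (lt_of_lt_of_le hm hcard) (lt_irrefl _)
    obtain ⟨g, hgsum, i0, hgi0⟩ := Fintype.not_linearIndependent_iff.mp hdep
    have hA : ∑ i : Fin m, g i • v' (Sum.inl (t, i)) = (0 : A) := by
      have h5 := congrArg (Subtype.val) hgsum
      push_cast at h5
      simpa [hu] using h5
    have h6 : g i0 • v' (Sum.inl (t, i0))
        + ∑ i ∈ Finset.univ.erase i0, g i • v' (Sum.inl (t, i)) = 0 := by
      exact (Finset.add_sum_erase Finset.univ
        (fun i => g i • v' (Sum.inl (t, i))) (Finset.mem_univ i0)).trans hA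
    have hrepr : v' (Sum.inl (t, i0))
        = ∑ i ∈ Finset.univ.erase i0, (-(g i0)⁻¹ * g i) • v' (Sum.inl (t, i)) := by
      have h7 : g i0 • v' (Sum.inl (t, i0))
          = - ∑ i ∈ Finset.univ.erase i0, g i • v' (Sum.inl (t, i)) :=
        eq_neg_of_add_eq_zero_left h6
      calc v' (Sum.inl (t, i0)) = (g i0)⁻¹ • (g i0 • v' (Sum.inl (t, i0))) :=
            (inv_smul_smul₀ hgi0 _).symm
        _ = (g i0)⁻¹ • (- ∑ i ∈ Finset.univ.erase i0, g i • v' (Sum.inl (t, i))) := by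
            rw [h7]
        _ = ∑ i ∈ Finset.univ.erase i0, (-(g i0)⁻¹ * g i) • v' (Sum.inl (t, i)) := by
            rw [smul_neg, Finset.smul_sum, ← Finset.sum_neg_distrib]
            refine Finset.sum_congr rfl fun i _ => ?_
            rw [smul_smul, ← neg_smul, neg_mul]
    have h8 : G v' = G (Function.update v' (Sum.inl (t, i0)) (v' (Sum.inl (t, i0)))) := by
      rw [Function.update_eq_self]
    rw [h8, hrepr, MultilinearMap.map_update_sum]
    refine Finset.sum_eq_zero fun i hi => ?_
    have hine : i ≠ i0 := Finset.ne_of_mem_erase hi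
    rw [MultilinearMap.map_update_smul]
    have h9 : G (Function.update v' (Sum.inl (t, i0)) (v' (Sum.inl (t, i)))) = 0 := by
      refine key1 _ t i0 i (Ne.symm hine) ?_
      have hne2 : (Sum.inl (t, i) : (Fin r × Fin m) ⊕ Fin k) ≠ Sum.inl (t, i0) := by
        simp [hine]
      rw [Function.update_self, Function.update_of_ne hne2]
    rw [h9, smul_zero]
  -- decompose v into semisimple and radical parts
  have hdecomp : ∀ x : (Fin r × Fin m) ⊕ Fin k,
      ∃ y, ∃ z, y ∈ Subalgebra.toSubmodule S ∧ z ∈ J ∧ v x = y + z := by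
    intro x
    have hx : v x ∈ (Subalgebra.toSubmodule S) ⊔ J := by
      rw [codisjoint_iff.mp hcompl.codisjoint]
      trivial
    obtain ⟨y, hy, z, hz, hyz⟩ := Submodule.mem_sup.mp hx
    exact ⟨y, z, hy, hz, hyz.symm⟩
  choose sv jv hsvS hjvJ hsum using hdecomp
  have hveq : v = sv + jv := funext fun x => hsum x
  rw [← hGapply v, hveq, G.map_add_univ]
  refine Finset.sum_eq_zero fun sset _ => ?_
  by_cases hc : ∃ t : Fin r, ∀ i : Fin m, (Sum.inl (t, i) : (Fin r × Fin m) ⊕ Fin k) ∈ sset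
  · obtain ⟨t, ht⟩ := hc
    refine key2 _ t fun i => ?_
    rw [Finset.piecewise_eq_of_mem _ _ _ (ht i)]
    exact hsvS _
  · push_neg at hc
    choose ii hii using hc
    rw [hGapply]
    refine Finset.sum_eq_zero fun w _ => ?_
    have hzero : (List.ofFn fun p => (sset.piecewise sv jv) (w p)).prod = 0 := by
      refine stmt2_prod_eq_zero (F := F) J hJl s hnil _ hr
        (fun t => w.symm (Sum.inl (t, ii t))) ?_ ?_
      · intro t1 t2 h12
        have h13 := w.symm.injective h12
        have h14 : (t1, ii t1) = (t2, ii t2) := Sum.inl.inj h13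
        exact congrArg Prod.fst h14
      · intro t
        rw [Equiv.apply_symm_apply]
        rw [Finset.piecewise_eq_of_notMem _ _ _ (hii t)]
        exact hjvJ _
    rw [hzero, smul_zero]
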